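/- Let F be a field and let E be a finite-dimensional F-linear subspace of Mat_{ℓ×m}(F) such that every nonzero matrix in E has rank 1. Then dim E ≤ max(ℓ, m). -/

import Mathlib

open Matrix

section Aux

variable {K : Type*} [Field K] {ℓ m : ℕ}

/-- A rank-one matrix factors as an outer product. -/
lemma exists_factor {M : Matrix (Fin ℓ) (Fin m) K} (h : M.rank = 1) :
    ∃ (u : Fin ℓ → K) (v : Fin m → K), ∀ i j, M i j = u i * v j := by
  rw [Matrix.rank] at h
  obtain ⟨u', hu', hspan⟩ := (finrank_eq_one_iff' ).mp h
  have hcol : ∀ j : Fin m, ∃ c : K, ∀ i, c * (u' : Fin ℓ → K) i = M i j := by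
    intro j
    have hmem : M.mulVec (Pi.single j 1) ∈ LinearMap.range M.mulVecLin :=
      ⟨Pi.single j 1, rfl⟩
    obtain ⟨c, hc⟩ := hspan ⟨_, hmem⟩
    refine ⟨c, fun i => ?_⟩
    have := congrFun (congrArg (Subtype.val) hc) i
    simpa [Matrix.mulVec_single] using this
  choose v hv using hcol
  exact ⟨(u' : Fin ℓ → K), v, fun i j => by rw [← hv j i, mul_comm]⟩

/-- Transitivity of proportionality through a nonzero middle vector. -/
lemma prop_trans {n : ℕ} {a b c : Fin n → K} (hb : b ≠ 0)
    (hab : ∀ i j, a i * b j = a j * b i) (hbc : ∀ i j, b i * c j = b j * c i) :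
    ∀ i j, a i * c j = a j * c i := by
  obtain ⟨k, hk⟩ := Function.ne_iff.mp hb
  intro i j
  have key : a i * c j * (b k * b k) = a j * c i * (b k * b k) := by
    linear_combination (b k * c j) * hab i k + (a k * b i) * hbc k j
      - (b k * c i) * hab j k - (a k * b j) * hbc k i
  exact mul_right_cancel₀ (mul_ne_zero hk hk) key

/-- Pair lemma: if the right factors are not proportional, the left factors are. -/
lemma pair_lemma {E : Submodule K (Matrix (Fin ℓ) (Fin m) K)}
    (hE : ∀ M ∈ E, M ≠ 0 → Matrix.rank M = 1)
    {A B : Matrix (Fin ℓ) (Fin m) K} (hA : A ∈ E) (hB : B ∈ E)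
    {u w : Fin ℓ → K} {v z : Fin m → K}
    (hAf : ∀ i j, A i j = u i * v j) (hBf : ∀ i j, B i j = w i * z j)
    (hvz : ¬ ∀ j j', v j * z j' = v j' * z j) :
    ∀ i i', u i * w i' = u i' * w i := by
  obtain ⟨p, q, hpq⟩ :
      ∃ (p : Fin ℓ → K) (q : Fin m → K), ∀ i j, u i * v j + w i * z j = p i * q j := by
    by_cases h0 : A + B = 0
    · refine ⟨0, 0, fun i j => ?_⟩
      have := congrFun (congrFun h0 i) j
      simp only [Matrix.add_apply, hAf, hBf, Matrix.zero_apply] at this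
      simpa using this
    · obtain ⟨p, q, hpq⟩ := exists_factor (hE _ (E.add_mem hA hB) h0)
      refine ⟨p, q, fun i j => ?_⟩
      have := hpq i j
      simp only [Matrix.add_apply, hAf, hBf] at this
      exact this
  push_neg at hvz
  obtain ⟨j₀, j₁, hd⟩ := hvz
  have hd' : v j₀ * z j₁ - v j₁ * z j₀ ≠ 0 := sub_ne_zero_of_ne hd
  intro i i'
  have h1 : ∀ k, u k * (v j₀ * z j₁ - v j₁ * z j₀) = p k * (q j₀ * z j₁ - q j₁ * z j₀) :=
    fun k => by linear_combination z j₁ * hpq k j₀ - z j₀ * hpq k j₁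
  have h2 : ∀ k, w k * (v j₀ * z j₁ - v j₁ * z j₀) = p k * (q j₁ * v j₀ - q j₀ * v j₁) :=
    fun k => by linear_combination v j₀ * hpq k j₁ - v j₁ * hpq k j₀
  set d := v j₀ * z j₁ - v j₁ * z j₀ with hdd
  set α := q j₀ * z j₁ - q j₁ * z j₀ with ha
  set β := q j₁ * v j₀ - q j₀ * v j₁ with hbb
  have key : u i * w i' * (d * d) = u i' * w i * (d * d) := by
    linear_combination (w i' * d) * h1 i + (p i * α) * h2 i'
      - (w i * d) * h1 i' - (p i' * α) * h2 i
  exact mul_right_cancel₀ (mul_ne_zero hd' hd') key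

/-- If every column of every matrix of `E` is proportional to a fixed nonzero vector `u`,
then `E` injects into row vectors. -/
lemma dim_le_of_col {E : Submodule K (Matrix (Fin ℓ) (Fin m) K)}
    {u : Fin ℓ → K} {i₀ : Fin ℓ} (hu : u i₀ ≠ 0)
    (h : ∀ M ∈ E, ∀ (i i' : Fin ℓ) (j : Fin m), u i * M i' j = u i' * M i j) :
    Module.finrank K ↥E ≤ m := by
  let φ : E →ₗ[K] (Fin m → K) :=
    { toFun := fun M => fun j => (M : Matrix (Fin ℓ) (Fin m) K) i₀ j
      map_add' := fun x y => rfl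
      map_smul' := fun c x => rfl }
  have hinj : Function.Injective φ := by
    intro x y hxy
    have hsub : ((x - y : E) : Matrix (Fin ℓ) (Fin m) K) ∈ E := (x - y : E).2
    apply Subtype.ext
    ext i j
    have hz : ∀ j, ((x - y : E) : Matrix (Fin ℓ) (Fin m) K) i₀ j = 0 := by
      intro j
      have := congrFun hxy j
      simp only [φ, LinearMap.coe_mk, AddHom.coe_mk] at this
      simp [Submodule.coe_sub, Matrix.sub_apply, this]
      exact sub_eq_zero.mpr this
    have := h _ hsub i₀ i j
    rw [hz j, mul_zero] at this
    have h0 : ((x - y : E) : Matrix (Fin ℓ) (Fin m) K) i j = 0 := by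
      rcases mul_eq_zero.mp this with h' | h'
      · exact absurd h' hu
      · exact h'
    simp only [Submodule.coe_sub, Matrix.sub_apply] at h0
    exact sub_eq_zero.mp h0
  calc Module.finrank K ↥E ≤ Module.finrank K (Fin m → K) :=
        LinearMap.finrank_le_finrank_of_injective hinj
    _ = m := by simp

/-- Row version. -/
lemma dim_le_of_row {E : Submodule K (Matrix (Fin ℓ) (Fin m) K)}
    {z : Fin m → K} {j₀ : Fin m} (hz : z j₀ ≠ 0)
    (h : ∀ M ∈ E, ∀ (j j' : Fin m) (i : Fin ℓ), z j * M i j' = z j' * M i j) :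
    Module.finrank K ↥E ≤ ℓ := by
  let φ : E →ₗ[K] (Fin ℓ → K) :=
    { toFun := fun M => fun i => (M : Matrix (Fin ℓ) (Fin m) K) i j₀
      map_add' := fun x y => rfl
      map_smul' := fun c x => rfl }
  have hinj : Function.Injective φ := by
    intro x y hxy
    have hsub : ((x - y : E) : Matrix (Fin ℓ) (Fin m) K) ∈ E := (x - y : E).2
    apply Subtype.ext
    ext i j
    have hzz : ∀ i, ((x - y : E) : Matrix (Fin ℓ) (Fin m) K) i j₀ = 0 := by
      intro i
      have := congrFun hxy i
      simp only [φ, LinearMap.coe_mk, AddHom.coe_mk] at this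
      simp [Submodule.coe_sub, Matrix.sub_apply, this]
      exact sub_eq_zero.mpr this
    have := h _ hsub j₀ j i
    rw [hzz i, mul_zero] at this
    have h0 : ((x - y : E) : Matrix (Fin ℓ) (Fin m) K) i j = 0 := by
      rcases mul_eq_zero.mp this with h' | h'
      · exact absurd h' hz
      · exact h'
    simp only [Submodule.coe_sub, Matrix.sub_apply] at h0
    exact sub_eq_zero.mp h0
  calc Module.finrank K ↥E ≤ Module.finrank K (Fin ℓ → K) :=
        LinearMap.finrank_le_finrank_of_injective hinj
    _ = ℓ := by simp

end Aux

/-- A linear space of `ℓ × m` matrices over a field in which every nonzero matrix has rank one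
has dimension at most `max ℓ m`. -/
theorem rank_one_subspace_dim_le (K : Type*) [Field K] (ℓ m : ℕ)
    (E : Submodule K (Matrix (Fin ℓ) (Fin m) K))
    (hE : ∀ M ∈ E, M ≠ 0 → Matrix.rank M = 1) :
    Module.finrank K ↥E ≤ max ℓ m := by
  by_cases hbot : E = ⊥
  · subst hbot
    simp
  · obtain ⟨A, hAE, hA0⟩ := Submodule.exists_mem_ne_zero_of_ne_bot hbot
    obtain ⟨u, v, hAf⟩ := exists_factor (hE A hAE hA0)
    -- pick nonzero entries of u, v
    obtain ⟨iu, jv, hAij⟩ : ∃ i j, A i j ≠ 0 := by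
      by_contra hc
      push_neg at hc
      exact hA0 (by ext i j; simp [hc])
    have huv : u iu * v jv ≠ 0 := by rw [← hAf]; exact hAij
    have hu0 : u iu ≠ 0 := left_ne_zero_of_mul huv
    have hv0 : v jv ≠ 0 := right_ne_zero_of_mul huv
    have hvne : v ≠ 0 := fun hv => hv0 (by rw [hv]; rfl)
    by_cases hcol : ∀ M ∈ E, ∀ (i i' : Fin ℓ) (j : Fin m), u i * M i' j = u i' * M i j
    · exact le_trans (dim_le_of_col hu0 hcol) (le_max_right ℓ m)
    · push_neg at hcol
      obtain ⟨B, hBE, i₁, i₂, j₃, hBne⟩ := hcol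
      have hB0 : B ≠ 0 := by
        rintro rfl
        simp at hBne
      obtain ⟨w, z, hBf⟩ := exists_factor (hE B hBE hB0)
      obtain ⟨iw, jz, hBij⟩ : ∃ i j, B i j ≠ 0 := by
        by_contra hc
        push_neg at hc
        exact hB0 (by ext i j; simp [hc])
      have hwz : w iw * z jz ≠ 0 := by rw [← hBf]; exact hBij
      have hz0 : z jz ≠ 0 := right_ne_zero_of_mul hwz
      have hzne : z ≠ 0 := fun hzz => hz0 (by rw [hzz]; rfl)
      -- u and w are not proportional
      have huw : ¬ ∀ i i', u i * w i' = u i' * w i := by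
        intro hP
        apply hBne
        rw [hBf, hBf, ← mul_assoc, ← mul_assoc, hP i₁ i₂]
      -- hence v and z are proportional
      have hvz : ∀ j j', v j * z j' = v j' * z j := by
        by_contra hc
        exact huw (pair_lemma hE hAE hBE hAf hBf hc)
      -- every matrix of E has rows proportional to z
      have hrow : ∀ M ∈ E, ∀ (j j' : Fin m) (i : Fin ℓ), z j * M i j' = z j' * M i j := by
        intro M hME j j' i
        by_cases hM0 : M = 0
        · subst hM0; simp
        · obtain ⟨p, q, hMf⟩ := exists_factor (hE M hME hM0)
          obtain ⟨ip, jq, hMij⟩ : ∃ i j, M i j ≠ 0 := by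
            by_contra hc
            push_neg at hc
            exact hM0 (by ext i j; simp [hc])
          have hpq : p ip * q jq ≠ 0 := by rw [← hMf]; exact hMij
          have hp0 : p ip ≠ 0 := left_ne_zero_of_mul hpq
          have hpne : p ≠ 0 := fun hp => hp0 (by rw [hp]; rfl)
          by_cases hqz : ∀ j j', q j * z j' = q j' * z j
          · rw [hMf, hMf]
            linear_combination p i * hqz j' j
          · exfalso
            -- q not prop to z ⇒ q not prop to v (since v prop to z, v ≠ 0)
            have hqv : ¬ ∀ j j', q j * v j' = q j' * v j := by
              intro hqv
              exact hqz (prop_trans hvne hqv hvz)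
            have hpu : ∀ i i', p i * u i' = p i' * u i :=
              pair_lemma hE hME hAE hMf hAf hqv
            have hpw : ∀ i i', p i * w i' = p i' * w i :=
              pair_lemma hE hME hBE hMf hBf hqz
            have hup : ∀ i i', u i * p i' = u i' * p i :=
              fun i i' => by rw [mul_comm, hpu i' i, mul_comm]
            exact huw (prop_trans hpne hup hpw)
      exact le_trans (dim_le_of_row hz0 hrow) (le_max_left ℓ m)
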